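/- arXiv:1105.6212 — 3 statements merged into one kernel-verified Lean document; each statement's English description precedes it below -/
import Mathlib

section
/- Let 𝒞 ⊆ {0,1}ⁿ be a binary code of size m with minimum Hamming distance d, let ℓ be a positive integer and let 0 < β < 1/4. Let F be drawn uniformly at random from the set of ℓ×n matrices over 𝔽₂. Then, except with probability at most (m choose 2)·2^{2ℓ}·exp(−2dβ²) over the choice of F, the matrix F has the following property: for every string s ∈ {0,1}ⁿ there exists at most one codeword c̃ ∈ 𝒞 for which there exists f ∈ span(F)\{0} with |f ⊙ (c̃ ⊕ s)| < (1/2)·(1/4 − β)·d; equivalently, for all other codewords c ∈ 𝒞 with c ≠ c̃, it holds that |f ⊙ (c ⊕ s)| ≥ (1/2)·(1/4 − β)·d for all f ∈ span(F)\{0}. -/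
open Finset Matrix

-- exp quadratic bound
lemma exp_neg_le_quad {x : ℝ} (hx : 0 ≤ x) : Real.exp (-x) ≤ 1 - x + x ^ 2 / 2 := by
  have key : MonotoneOn (fun x : ℝ => 1 - x + x ^ 2 / 2 - Real.exp (-x)) (Set.Ici 0) := by
    apply monotoneOn_of_deriv_nonneg (convex_Ici 0)
    · fun_prop
    · intro y hy
      apply DifferentiableAt.differentiableWithinAt
      fun_prop
    · intro y hy
      have h : HasDerivAt (fun x : ℝ => 1 - x + x ^ 2 / 2 - Real.exp (-x))
          (-1 + y - (-Real.exp (-y))) y := by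
        have h1 : HasDerivAt (fun x : ℝ => 1 - x) (-1) y := by
          simpa using (hasDerivAt_id y).const_sub 1
        have h2 : HasDerivAt (fun x : ℝ => x ^ 2 / 2) y y := by
          simpa using (hasDerivAt_pow 2 y).div_const 2
        have h3 : HasDerivAt (fun x : ℝ => Real.exp (-x)) (-Real.exp (-y)) y := by
          simpa [Function.comp_def] using (Real.hasDerivAt_exp (-y)).comp y ((hasDerivAt_id y).neg)
        exact (h1.add h2).sub h3
      rw [h.deriv]
      have := Real.add_one_le_exp (-y)
      linarith
  have h0 : (0:ℝ) ∈ Set.Ici (0:ℝ) := Set.mem_Ici.mpr le_rfl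
  have := key h0 (Set.mem_Ici.mpr hx) hx
  simp at this
  linarith

-- existence of u with both dot products 1
lemma exists_u {l : ℕ} (t₁ t₂ : Fin l → ZMod 2) (ht₁ : t₁ ≠ 0) (ht₂ : t₂ ≠ 0) :
    ∃ u : Fin l → ZMod 2, t₁ ⬝ᵥ u = 1 ∧ t₂ ⬝ᵥ u = 1 := by
  have hone : ∀ t : Fin l → ZMod 2, t ≠ 0 → ∃ a, t ⬝ᵥ a = 1 := by
    intro t ht
    obtain ⟨j, hj⟩ := Function.ne_iff.mp ht
    refine ⟨Pi.single j 1, ?_⟩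
    rw [dotProduct_single, mul_one]
    simp only [Pi.zero_apply] at hj
    revert hj; generalize t j = x; revert x; decide
  obtain ⟨a, ha⟩ := hone t₁ ht₁
  obtain ⟨b, hb⟩ := hone t₂ ht₂
  by_cases h2a : t₂ ⬝ᵥ a = 1
  · exact ⟨a, ha, h2a⟩
  by_cases h1b : t₁ ⬝ᵥ b = 1
  · exact ⟨b, h1b, hb⟩
  refine ⟨a + b, ?_, ?_⟩ <;> rw [dotProduct_add]
  · have : t₁ ⬝ᵥ b = 0 := by revert h1b; generalize t₁ ⬝ᵥ b = x; revert x; decide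
    rw [ha, this]; rfl
  · have : t₂ ⬝ᵥ a = 0 := by revert h2a; generalize t₂ ⬝ᵥ a = x; revert x; decide
    rw [hb, this]; rfl

lemma fiber_lb {l : ℕ} (t₁ t₂ : Fin l → ZMod 2) (ht₁ : t₁ ≠ 0) (ht₂ : t₂ ≠ 0) :
    2 ^ l ≤ 4 * (univ.filter (fun c : Fin l → ZMod 2 => t₁ ⬝ᵥ c = 1 ∧ t₂ ⬝ᵥ c = 1)).card := by
  classical
  obtain ⟨u, hu₁, hu₂⟩ := exists_u t₁ t₂ ht₁ ht₂
  have hpart : (univ : Finset (Fin l → ZMod 2)).card =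
      ∑ p : ZMod 2 × ZMod 2, ((univ : Finset (Fin l → ZMod 2)).filter
        (fun c => (t₁ ⬝ᵥ c, t₂ ⬝ᵥ c) = p)).card := by
    apply card_eq_sum_card_fiberwise
    intro c _; exact mem_univ _
  have hcardu : (univ : Finset (Fin l → ZMod 2)).card = 2 ^ l := by
    simp [Fintype.card_fun]
  have hfib : ∀ p : ZMod 2 × ZMod 2,
      ((univ : Finset (Fin l → ZMod 2)).filter (fun c => (t₁ ⬝ᵥ c, t₂ ⬝ᵥ c) = p)).card ≤
      (univ.filter (fun c : Fin l → ZMod 2 => t₁ ⬝ᵥ c = 1 ∧ t₂ ⬝ᵥ c = 1)).card := by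
    intro p
    rcases ((univ : Finset (Fin l → ZMod 2)).filter
        (fun c => (t₁ ⬝ᵥ c, t₂ ⬝ᵥ c) = p)).eq_empty_or_nonempty with he | ⟨w, hw⟩
    · simp [he]
    · simp only [mem_filter, mem_univ, true_and, Prod.ext_iff] at hw
      apply card_le_card_of_injOn (fun c => c + (w + u))
      · intro c hc
        simp only [coe_filter, Set.mem_setOf_eq, mem_filter, mem_univ, true_and, Prod.ext_iff] at hc ⊢
        have hadd : ∀ a : ZMod 2, a + a = 0 := by decide
        constructor
        · rw [dotProduct_add, dotProduct_add, hc.1, hw.1, hu₁, ← add_assoc, hadd, zero_add]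
        · rw [dotProduct_add, dotProduct_add, hc.2, hw.2, hu₂, ← add_assoc, hadd, zero_add]
      · intro a _ b _ h
        simpa using congrArg (fun c => c + (w + u)) h
  calc 2 ^ l = ∑ p : ZMod 2 × ZMod 2, ((univ : Finset (Fin l → ZMod 2)).filter
        (fun c => (t₁ ⬝ᵥ c, t₂ ⬝ᵥ c) = p)).card := by rw [← hcardu, hpart]
    _ ≤ ∑ _p : ZMod 2 × ZMod 2, (univ.filter
        (fun c : Fin l → ZMod 2 => t₁ ⬝ᵥ c = 1 ∧ t₂ ⬝ᵥ c = 1)).card :=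
      Finset.sum_le_sum (fun p _ => hfib p)
    _ = 4 * _ := by simp [Finset.sum_const]

lemma chernoff {n l d : ℕ} {β : ℝ} (hβ0 : 0 < β) (hβ : β < 1/4)
    (t₁ t₂ : Fin l → ZMod 2) (ht₁ : t₁ ≠ 0) (ht₂ : t₂ ≠ 0)
    (v : Fin n → ZMod 2) (hd : d ≤ (univ.filter (fun i => v i = 1)).card) :
    ((univ.filter (fun F : Matrix (Fin l) (Fin n) (ZMod 2) =>
      ((univ.filter (fun i => (t₁ ᵥ* F) i * (t₂ ᵥ* F) i * v i = 1)).card : ℝ) <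
        (1/4 - β) * d)).card : ℝ)
    ≤ 2 ^ (l * n) * Real.exp (-(2 * d * β ^ 2)) := by
  classical
  set lam : ℝ := 4 * β with hlam
  have hlam0 : 0 < lam := by positivity
  set S : Finset (Fin n) := univ.filter (fun i => v i = 1) with hS
  set N : ℕ := S.card with hN
  set k : ℝ := (1/4 - β) * d with hk
  -- the per-column indicator
  set x : Fin n → (Fin l → ZMod 2) → ℝ :=
    fun _i c => if t₁ ⬝ᵥ c = 1 ∧ t₂ ⬝ᵥ c = 1 then 1 else 0 with hx
  have hvm : ∀ (t : Fin l → ZMod 2) (F : Matrix (Fin l) (Fin n) (ZMod 2)) i,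
      (t ᵥ* F) i = t ⬝ᵥ (fun j => F j i) := fun _ _ _ => rfl
  -- rewrite the weight as a sum over S of column indicators
  have hXeq : ∀ F : Matrix (Fin l) (Fin n) (ZMod 2),
      ((univ.filter (fun i => (t₁ ᵥ* F) i * (t₂ ᵥ* F) i * v i = 1)).card : ℝ)
      = ∑ i ∈ S, x i (fun j => F j i) := by
    intro F
    have habc : ∀ a b c : ZMod 2, (a * b * c = 1 ↔ c = 1 ∧ (a = 1 ∧ b = 1)) := by decide
    have h1 : (univ.filter (fun i => (t₁ ᵥ* F) i * (t₂ ᵥ* F) i * v i = 1))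
        = S.filter (fun i => t₁ ⬝ᵥ (fun j => F j i) = 1 ∧ t₂ ⬝ᵥ (fun j => F j i) = 1) := by
      rw [hS, filter_filter]
      apply filter_congr
      intro i _
      rw [hvm, hvm, habc]
    rw [h1, card_filter]
    push_cast [hx]
    rfl
  have hprodexp : ∀ F : Matrix (Fin l) (Fin n) (ZMod 2),
      Real.exp (lam * k) * ∏ i, (if i ∈ S then Real.exp (-lam * x i (fun j => F j i)) else 1)
      = Real.exp (lam * (k - ∑ i ∈ S, x i (fun j => F j i))) := by
    intro F
    rw [Finset.prod_ite_mem, univ_inter, ← Real.exp_sum, ← Real.exp_add]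
    congr 1
    simp only [neg_mul, Finset.sum_neg_distrib, ← Finset.mul_sum]
    ring
  -- Chernoff: bound the cardinality by the exponential moment sum
  have step1 : ((univ.filter (fun F : Matrix (Fin l) (Fin n) (ZMod 2) =>
      ((univ.filter (fun i => (t₁ ᵥ* F) i * (t₂ ᵥ* F) i * v i = 1)).card : ℝ) < k)).card : ℝ)
      ≤ ∑ F : Matrix (Fin l) (Fin n) (ZMod 2),
          Real.exp (lam * k) * ∏ i, (if i ∈ S then Real.exp (-lam * x i (fun j => F j i)) else 1) := by
    calc ((univ.filter (fun F : Matrix (Fin l) (Fin n) (ZMod 2) =>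
      ((univ.filter (fun i => (t₁ ᵥ* F) i * (t₂ ᵥ* F) i * v i = 1)).card : ℝ) < k)).card : ℝ)
        = ∑ F ∈ univ.filter (fun F : Matrix (Fin l) (Fin n) (ZMod 2) =>
            ((univ.filter (fun i => (t₁ ᵥ* F) i * (t₂ ᵥ* F) i * v i = 1)).card : ℝ) < k),
            (1 : ℝ) := by simp
      _ ≤ ∑ F ∈ univ.filter (fun F : Matrix (Fin l) (Fin n) (ZMod 2) =>
            ((univ.filter (fun i => (t₁ ᵥ* F) i * (t₂ ᵥ* F) i * v i = 1)).card : ℝ) < k),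
            Real.exp (lam * k) * ∏ i, (if i ∈ S then Real.exp (-lam * x i (fun j => F j i)) else 1) := by
          apply Finset.sum_le_sum
          intro F hF
          rw [mem_filter] at hF
          rw [hprodexp F]
          rw [Real.one_le_exp_iff]
          have hXk : ∑ i ∈ S, x i (fun j => F j i) < k := by rw [← hXeq F]; exact hF.2
          nlinarith
      _ ≤ _ := by
          apply Finset.sum_le_sum_of_subset_of_nonneg (filter_subset _ _)
          intro F _ _
          have : (0:ℝ) < ∏ i, (if i ∈ S then Real.exp (-lam * x i (fun j => F j i)) else 1) := by
            apply Finset.prod_pos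
            intro i _
            split <;> [exact Real.exp_pos _; norm_num]
          positivity
  -- factor the sum over matrices into a product over columns
  have step2 : ∑ F : Matrix (Fin l) (Fin n) (ZMod 2),
        ∏ i, (if i ∈ S then Real.exp (-lam * x i (fun j => F j i)) else 1)
      = ∏ i : Fin n, ∑ c : Fin l → ZMod 2, (if i ∈ S then Real.exp (-lam * x i c) else 1) := by
    rw [Fintype.prod_sum]
    apply Fintype.sum_bijective (Matrix.transpose (α := ZMod 2) (m := Fin l) (n := Fin n))
    · exact Function.bijective_iff_has_inverse.mpr
        ⟨Matrix.transpose, fun M => Matrix.transpose_transpose M,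
          fun M => Matrix.transpose_transpose M⟩
    · intro F
      rfl
  -- per-column bound
  have hA := fiber_lb t₁ t₂ ht₁ ht₂
  set A : ℕ := (univ.filter (fun c : Fin l → ZMod 2 => t₁ ⬝ᵥ c = 1 ∧ t₂ ⬝ᵥ c = 1)).card with hAdef
  have hcardfun : (Fintype.card (Fin l → ZMod 2)) = 2 ^ l := by simp
  have hcol : ∀ i : Fin n, i ∈ S →
      ∑ c : Fin l → ZMod 2, Real.exp (-lam * x i c) ≤ 2 ^ l * Real.exp (-β + 2 * β ^ 2) := by
    intro i _
    have hsum : ∑ c : Fin l → ZMod 2, Real.exp (-lam * x i c)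
        = A * Real.exp (-lam) + ((2 ^ l : ℝ) - A) := by
      rw [hx]
      simp only [apply_ite (fun y : ℝ => Real.exp (-lam * y)), mul_one, mul_zero, Real.exp_zero]
      rw [Finset.sum_ite, Finset.sum_const, Finset.sum_const]
      have hcompl : (univ.filter (fun c : Fin l → ZMod 2 =>
          ¬(t₁ ⬝ᵥ c = 1 ∧ t₂ ⬝ᵥ c = 1))).card = 2 ^ l - A := by
        have := Finset.card_filter_add_card_filter_not
          (s := (univ : Finset (Fin l → ZMod 2)))
          (p := fun c => t₁ ⬝ᵥ c = 1 ∧ t₂ ⬝ᵥ c = 1)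
        simp only [card_univ, hcardfun] at this
        omega
      rw [hcompl]
      have hAle : A ≤ 2 ^ l := by
        calc A ≤ (univ : Finset (Fin l → ZMod 2)).card := card_filter_le _ _
          _ = 2 ^ l := by rw [card_univ, hcardfun]
      simp only [nsmul_eq_mul, mul_one]
      rw [Nat.cast_sub hAle]
      push_cast
      ring
    rw [hsum]
    have hexplam : Real.exp (-lam) ≤ 1 - lam + lam ^ 2 / 2 := exp_neg_le_quad hlam0.le
    have hA4 : (2:ℝ) ^ l ≤ 4 * A := by exact_mod_cast hA
    have h1e : 0 ≤ 1 - Real.exp (-lam) := by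
      rw [sub_nonneg, Real.exp_le_one_iff]
      linarith
    have hmid : A * Real.exp (-lam) + ((2 ^ l : ℝ) - A)
        ≤ (2:ℝ) ^ l * (1 + (-β + 2 * β ^ 2)) := by
      have e1 : A * Real.exp (-lam) + ((2 ^ l : ℝ) - A)
          = (2:ℝ)^l - A * (1 - Real.exp (-lam)) := by ring
      rw [e1]
      have e2 : (2:ℝ)^l / 4 * (1 - Real.exp (-lam)) ≤ A * (1 - Real.exp (-lam)) := by
        apply mul_le_mul_of_nonneg_right _ h1e
        linarith
      have e3 : lam - lam ^ 2 / 2 ≤ 1 - Real.exp (-lam) := by linarith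
      have e4 : (2:ℝ)^l / 4 * (lam - lam ^ 2 / 2) ≤ (2:ℝ)^l / 4 * (1 - Real.exp (-lam)) := by
        apply mul_le_mul_of_nonneg_left e3
        positivity
      have e5 : (2:ℝ)^l * (1 + (-β + 2 * β ^ 2)) = (2:ℝ)^l - (2:ℝ)^l/4 * (lam - lam^2/2) := by
        rw [hlam]; ring
      linarith
    have hfin : (2:ℝ) ^ l * (1 + (-β + 2 * β ^ 2)) ≤ 2 ^ l * Real.exp (-β + 2 * β ^ 2) := by
      apply mul_le_mul_of_nonneg_left _ (by positivity)
      have := Real.add_one_le_exp (-β + 2 * β ^ 2)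
      linarith
    linarith
  -- assemble
  have hSn : N ≤ n := by
    calc N ≤ (univ : Finset (Fin n)).card := card_le_card (by rw [hS]; exact filter_subset _ _)
      _ = n := by simp
  have step3 : ∏ i : Fin n, ∑ c : Fin l → ZMod 2, (if i ∈ S then Real.exp (-lam * x i c) else 1)
      ≤ ((2:ℝ) ^ l * Real.exp (-β + 2 * β ^ 2)) ^ N * ((2:ℝ) ^ l) ^ (n - N) := by
    have hsplit : ∏ i : Fin n, ∑ c : Fin l → ZMod 2, (if i ∈ S then Real.exp (-lam * x i c) else 1)
        = (∏ i ∈ S, ∑ c : Fin l → ZMod 2, Real.exp (-lam * x i c)) *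
          (∏ i ∈ Sᶜ, ∑ c : Fin l → ZMod 2, (1:ℝ)) := by
      rw [← Finset.prod_mul_prod_compl S]
      congr 1
      · apply Finset.prod_congr rfl; intro i hi; simp [hi]
      · apply Finset.prod_congr rfl; intro i hi
        simp only [mem_compl] at hi
        simp [hi]
    rw [hsplit]
    have h2 : ∏ i ∈ Sᶜ, ∑ c : Fin l → ZMod 2, (1:ℝ) = ((2:ℝ) ^ l) ^ (n - N) := by
      have hone : ∑ c : Fin l → ZMod 2, (1:ℝ) = (2:ℝ) ^ l := by
        rw [Finset.sum_const, card_univ, hcardfun]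
        simp
      rw [Finset.prod_congr rfl (fun i _ => hone), Finset.prod_const, card_compl,
        Fintype.card_fin, ← hN]
    rw [h2]
    apply mul_le_mul_of_nonneg_right _ (by positivity)
    calc ∏ i ∈ S, ∑ c : Fin l → ZMod 2, Real.exp (-lam * x i c)
        ≤ ∏ _i ∈ S, ((2:ℝ) ^ l * Real.exp (-β + 2 * β ^ 2)) := by
          apply Finset.prod_le_prod
          · intro i _; positivity
          · exact hcol
      _ = ((2:ℝ) ^ l * Real.exp (-β + 2 * β ^ 2)) ^ N := by rw [Finset.prod_const]
  -- final numeric combination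
  have hexp1 : ((2:ℝ) ^ l * Real.exp (-β + 2 * β ^ 2)) ^ N * ((2:ℝ) ^ l) ^ (n - N)
      = (2:ℝ) ^ (l * n) * Real.exp ((-β + 2 * β ^ 2) * N) := by
    have hpow : ((2:ℝ)^l)^N * ((2:ℝ)^l)^(n-N) = (2:ℝ)^(l*n) := by
      rw [← pow_mul, ← pow_mul, ← pow_add]
      congr 1
      rw [← Nat.mul_add, Nat.add_sub_cancel' hSn]
    calc ((2:ℝ) ^ l * Real.exp (-β + 2 * β ^ 2)) ^ N * ((2:ℝ) ^ l) ^ (n - N)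
        = (((2:ℝ)^l)^N * ((2:ℝ)^l)^(n-N)) * Real.exp (-β + 2 * β ^ 2) ^ N := by ring
      _ = (2:ℝ)^(l*n) * Real.exp (-β + 2 * β ^ 2) ^ N := by rw [hpow]
      _ = (2:ℝ) ^ (l * n) * Real.exp ((-β + 2 * β ^ 2) * N) := by
          rw [← Real.exp_nat_mul, mul_comm (N:ℝ)]
  have hfinal : Real.exp (lam * k) * ((2:ℝ) ^ (l*n) * Real.exp ((-β + 2 * β ^ 2) * N))
      ≤ 2 ^ (l * n) * Real.exp (-(2 * d * β ^ 2)) := by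
    rw [← mul_assoc, mul_comm (Real.exp (lam*k)) _, mul_assoc, ← Real.exp_add]
    apply mul_le_mul_of_nonneg_left _ (by positivity)
    rw [Real.exp_le_exp]
    have hdN : (d:ℝ) ≤ N := by exact_mod_cast hd
    have hneg : -β + 2 * β ^ 2 ≤ 0 := by nlinarith
    have : (-β + 2 * β ^ 2) * N ≤ (-β + 2 * β ^ 2) * d := by nlinarith
    rw [hlam, hk]
    nlinarith
  calc ((univ.filter (fun F : Matrix (Fin l) (Fin n) (ZMod 2) =>
      ((univ.filter (fun i => (t₁ ᵥ* F) i * (t₂ ᵥ* F) i * v i = 1)).card : ℝ) <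
        (1/4 - β) * d)).card : ℝ)
      ≤ ∑ F : Matrix (Fin l) (Fin n) (ZMod 2),
          Real.exp (lam * k) * ∏ i, (if i ∈ S then Real.exp (-lam * x i (fun j => F j i)) else 1) :=
        step1
    _ = Real.exp (lam * k) * ∑ F : Matrix (Fin l) (Fin n) (ZMod 2),
          ∏ i, (if i ∈ S then Real.exp (-lam * x i (fun j => F j i)) else 1) := by
        rw [Finset.mul_sum]
    _ = Real.exp (lam * k) * ∏ i : Fin n, ∑ c : Fin l → ZMod 2,
          (if i ∈ S then Real.exp (-lam * x i c) else 1) := by rw [step2]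
    _ ≤ Real.exp (lam * k) * (((2:ℝ) ^ l * Real.exp (-β + 2 * β ^ 2)) ^ N * ((2:ℝ) ^ l) ^ (n - N)) := by
        apply mul_le_mul_of_nonneg_left step3 (Real.exp_pos _).le
    _ = Real.exp (lam * k) * ((2:ℝ) ^ (l*n) * Real.exp ((-β + 2 * β ^ 2) * N)) := by rw [hexp1]
    _ ≤ 2 ^ (l * n) * Real.exp (-(2 * d * β ^ 2)) := hfinal

lemma pairs_card {α : Type*} [DecidableEq α] (C : Finset α) (enc : α → ℕ)
    (henc : Function.Injective enc) :
    (C.offDiag.filter (fun p => enc p.1 < enc p.2)).card = C.card.choose 2 := by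
  classical
  have h1 := Finset.card_filter_add_card_filter_not
    (s := C.offDiag) (p := fun p => enc p.1 < enc p.2)
  have h2 : C.offDiag.filter (fun p => ¬ enc p.1 < enc p.2)
      = C.offDiag.filter (fun p => enc p.2 < enc p.1) := by
    apply filter_congr
    intro p hp
    have hne : p.1 ≠ p.2 := (Finset.mem_offDiag.mp hp).2.2
    have : enc p.1 ≠ enc p.2 := fun h => hne (henc h)
    omega
  have h3 : (C.offDiag.filter (fun p => enc p.2 < enc p.1)).card
      = (C.offDiag.filter (fun p => enc p.1 < enc p.2)).card := by
    refine Finset.card_bij' (fun p _ => p.swap) (fun p _ => p.swap) ?_ ?_ ?_ ?_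
    · intro p hp
      rw [mem_filter] at hp ⊢
      obtain ⟨h4, h5, h6⟩ := Finset.mem_offDiag.mp hp.1
      exact ⟨Finset.mem_offDiag.mpr ⟨h5, h4, fun h => h6 h.symm⟩, hp.2⟩
    · intro p hp
      rw [mem_filter] at hp ⊢
      obtain ⟨h4, h5, h6⟩ := Finset.mem_offDiag.mp hp.1
      exact ⟨Finset.mem_offDiag.mpr ⟨h5, h4, fun h => h6 h.symm⟩, hp.2⟩
    · intro p _; rfl
    · intro p _; rfl
  rw [h2, h3] at h1
  rw [Finset.offDiag_card] at h1
  rw [Nat.choose_two_right]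
  have hmul : C.card * (C.card - 1) = C.card * C.card - C.card := by
    cases' Nat.eq_zero_or_pos C.card with h h
    · simp [h]
    · rw [Nat.mul_sub, mul_one]
  omega

noncomputable def eventSet (n l d : ℕ) (β : ℝ)
    (p : (Fin n → ZMod 2) × (Fin n → ZMod 2))
    (t : (Fin l → ZMod 2) × (Fin l → ZMod 2)) : Finset (Matrix (Fin l) (Fin n) (ZMod 2)) :=
  univ.filter (fun F => t.1 ≠ 0 ∧ t.2 ≠ 0 ∧
    ((univ.filter (fun i => (t.1 ᵥ* F) i * (t.2 ᵥ* F) i * (p.1 i + p.2 i) = 1)).card : ℝ) <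
      (1/4 - β) * d)

lemma mem_eventSet {n l d : ℕ} {β : ℝ} (F : Matrix (Fin l) (Fin n) (ZMod 2))
    (s c₁ c₂ : Fin n → ZMod 2) (t₁ t₂ : Fin l → ZMod 2)
    (ht₁ : t₁ ᵥ* F ≠ 0) (ht₂ : t₂ ᵥ* F ≠ 0)
    (h₁ : ((univ.filter (fun i => (t₁ ᵥ* F) i * (c₁ i + s i) = 1)).card : ℝ) <
      (1/2) * (1/4 - β) * d)
    (h₂ : ((univ.filter (fun i => (t₂ ᵥ* F) i * (c₂ i + s i) = 1)).card : ℝ) <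
      (1/2) * (1/4 - β) * d) :
    F ∈ eventSet n l d β (c₁, c₂) (t₁, t₂) := by
  rw [eventSet, mem_filter]
  refine ⟨mem_univ _, fun h => ht₁ (by simp only at h; rw [h, Matrix.zero_vecMul]),
    fun h => ht₂ (by simp only at h; rw [h, Matrix.zero_vecMul]), ?_⟩
  have hsub : (univ.filter (fun i => (t₁ ᵥ* F) i * (t₂ ᵥ* F) i * (c₁ i + c₂ i) = 1))
      ⊆ (univ.filter (fun i => (t₁ ᵥ* F) i * (c₁ i + s i) = 1)) ∪
        (univ.filter (fun i => (t₂ ᵥ* F) i * (c₂ i + s i) = 1)) := by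
    intro i hi
    rw [mem_filter] at hi
    have key : ∀ a b x y z : ZMod 2, a * b * (x + y) = 1 →
        a * (x + z) = 1 ∨ b * (y + z) = 1 := by decide
    rcases key _ _ _ _ (s i) hi.2 with h | h
    · exact mem_union_left _ (mem_filter.mpr ⟨mem_univ _, h⟩)
    · exact mem_union_right _ (mem_filter.mpr ⟨mem_univ _, h⟩)
  have hcard := card_le_card hsub
  have hcard2 := card_union_le
    (univ.filter (fun i => (t₁ ᵥ* F) i * (c₁ i + s i) = 1))
    (univ.filter (fun i => (t₂ ᵥ* F) i * (c₂ i + s i) = 1))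
  have : ((univ.filter (fun i => (t₁ ᵥ* F) i * (t₂ ᵥ* F) i * (c₁ i + c₂ i) = 1)).card : ℝ)
      ≤ ((univ.filter (fun i => (t₁ ᵥ* F) i * (c₁ i + s i) = 1)).card : ℝ)
        + ((univ.filter (fun i => (t₂ ᵥ* F) i * (c₂ i + s i) = 1)).card : ℝ) := by
    exact_mod_cast le_trans hcard hcard2
  linarith

-- the per-event bound, including degenerate t's
lemma eventSet_card_le {n l d : ℕ} {β : ℝ} (hβ0 : 0 < β) (hβ : β < 1/4)
    (C : Finset (Fin n → ZMod 2))
    (hdist : ∀ c ∈ C, ∀ c' ∈ C, c ≠ c' → d ≤ hammingDist c c')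
    (p : (Fin n → ZMod 2) × (Fin n → ZMod 2)) (hp : p ∈ C.offDiag)
    (t : (Fin l → ZMod 2) × (Fin l → ZMod 2)) :
    ((eventSet n l d β p t).card : ℝ) ≤ 2 ^ (l * n) * Real.exp (-(2 * d * β ^ 2)) := by
  classical
  by_cases ht1 : t.1 = 0
  · have : eventSet n l d β p t = ∅ := by
      rw [eventSet, filter_eq_empty_iff]
      intro F _
      simp [ht1]
    rw [this]
    simp
    positivity
  by_cases ht2 : t.2 = 0
  · have : eventSet n l d β p t = ∅ := by
      rw [eventSet, filter_eq_empty_iff]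
      intro F _
      simp [ht2]
    rw [this]
    simp
    positivity
  obtain ⟨hp1, hp2, hpne⟩ := Finset.mem_offDiag.mp hp
  have hdham := hdist p.1 hp1 p.2 hp2 hpne
  have hdcard : d ≤ (univ.filter (fun i => p.1 i + p.2 i = 1)).card := by
    refine le_trans hdham (le_of_eq ?_)
    rw [hammingDist]
    apply congrArg Finset.card
    apply filter_congr
    intro i _
    have : ∀ a b : ZMod 2, (a ≠ b) ↔ a + b = 1 := by decide
    exact this _ _
  have hsub : eventSet n l d β p t ⊆
      univ.filter (fun F : Matrix (Fin l) (Fin n) (ZMod 2) =>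
        ((univ.filter (fun i => (t.1 ᵥ* F) i * (t.2 ᵥ* F) i * (p.1 i + p.2 i) = 1)).card : ℝ) <
          (1/4 - β) * d) := by
    intro F hF
    rw [eventSet, mem_filter] at hF
    exact mem_filter.mpr ⟨mem_univ _, hF.2.2.2⟩
  refine le_trans ?_ (chernoff hβ0 hβ t.1 t.2 ht1 ht2 (fun i => p.1 i + p.2 i) hdcard)
  exact_mod_cast card_le_card hsub

/-- Corollary 13: let `C ⊆ {0,1}ⁿ` be a code of size `m` and minimum distance `d`,
and let `F` be a uniformly random `ℓ×n` matrix over 𝔽₂. Except with probability at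
most `(m choose 2)·2^{2ℓ}·exp(−2dβ²)`, the matrix `F` is such that for every
`s ∈ {0,1}ⁿ` there is at most one codeword `c̃` admitting a nonzero `f` in the row
span of `F` with `|f ⊙ (c̃ ⊕ s)| < (1/2)(1/4 − β)d` (equivalently: all other
codewords `c ≠ c̃` satisfy `|f ⊙ (c ⊕ s)| ≥ (1/2)(1/4 − β)d` for all such `f`).
The probability is expressed as (number of bad matrices) / 2^{ℓn}. -/
theorem stmt13 (n l m d : ℕ) (hn : 0 < n) (hl : 0 < l)
    (C : Finset (Fin n → ZMod 2)) (hcard : C.card = m)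
    (hdist : ∀ c ∈ C, ∀ c' ∈ C, c ≠ c' → d ≤ hammingDist c c')
    (β : ℝ) (hβ0 : 0 < β) (hβ : β < 1 / 4) :
    (Nat.card {F : Matrix (Fin l) (Fin n) (ZMod 2) //
        ¬ ∀ s : Fin n → ZMod 2, ∀ c₁ ∈ C, ∀ c₂ ∈ C,
            (∃ t : Fin l → ZMod 2, Matrix.vecMul t F ≠ 0 ∧
              ((Finset.univ.filter (fun i =>
                  Matrix.vecMul t F i * (c₁ i + s i) = 1)).card : ℝ) <
                (1 / 2) * (1 / 4 - β) * d) →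
            (∃ t : Fin l → ZMod 2, Matrix.vecMul t F ≠ 0 ∧
              ((Finset.univ.filter (fun i =>
                  Matrix.vecMul t F i * (c₂ i + s i) = 1)).card : ℝ) <
                (1 / 2) * (1 / 4 - β) * d) →
            c₁ = c₂} : ℝ)
      / 2 ^ (l * n)
    ≤ (m.choose 2 : ℝ) * 2 ^ (2 * l) * Real.exp (-(2 * d * β ^ 2)) := by
  classical
  set enc : (Fin n → ZMod 2) → ℕ := fun c => (Fintype.equivFin (Fin n → ZMod 2) c : ℕ) with henc
  have hencinj : Function.Injective enc := by
    intro a b h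
    exact (Fintype.equivFin (Fin n → ZMod 2)).injective (Fin.val_injective h)
  set pairs := C.offDiag.filter (fun p => enc p.1 < enc p.2) with hpairs
  set Bad : Finset (Matrix (Fin l) (Fin n) (ZMod 2)) :=
    univ.filter (fun F => ¬ ∀ s : Fin n → ZMod 2, ∀ c₁ ∈ C, ∀ c₂ ∈ C,
            (∃ t : Fin l → ZMod 2, Matrix.vecMul t F ≠ 0 ∧
              ((Finset.univ.filter (fun i =>
                  Matrix.vecMul t F i * (c₁ i + s i) = 1)).card : ℝ) <
                (1 / 2) * (1 / 4 - β) * d) →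
            (∃ t : Fin l → ZMod 2, Matrix.vecMul t F ≠ 0 ∧
              ((Finset.univ.filter (fun i =>
                  Matrix.vecMul t F i * (c₂ i + s i) = 1)).card : ℝ) <
                (1 / 2) * (1 / 4 - β) * d) →
            c₁ = c₂) with hBad
  have hcardeq : (Nat.card {F : Matrix (Fin l) (Fin n) (ZMod 2) //
      ¬ ∀ s : Fin n → ZMod 2, ∀ c₁ ∈ C, ∀ c₂ ∈ C,
            (∃ t : Fin l → ZMod 2, Matrix.vecMul t F ≠ 0 ∧
              ((Finset.univ.filter (fun i =>
                  Matrix.vecMul t F i * (c₁ i + s i) = 1)).card : ℝ) <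
                (1 / 2) * (1 / 4 - β) * d) →
            (∃ t : Fin l → ZMod 2, Matrix.vecMul t F ≠ 0 ∧
              ((Finset.univ.filter (fun i =>
                  Matrix.vecMul t F i * (c₂ i + s i) = 1)).card : ℝ) <
                (1 / 2) * (1 / 4 - β) * d) →
            c₁ = c₂}) = Bad.card := by
    letI : DecidablePred (fun F : Matrix (Fin l) (Fin n) (ZMod 2) =>
        ¬ ∀ s : Fin n → ZMod 2, ∀ c₁ ∈ C, ∀ c₂ ∈ C,
            (∃ t : Fin l → ZMod 2, Matrix.vecMul t F ≠ 0 ∧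
              ((Finset.univ.filter (fun i =>
                  Matrix.vecMul t F i * (c₁ i + s i) = 1)).card : ℝ) <
                (1 / 2) * (1 / 4 - β) * d) →
            (∃ t : Fin l → ZMod 2, Matrix.vecMul t F ≠ 0 ∧
              ((Finset.univ.filter (fun i =>
                  Matrix.vecMul t F i * (c₂ i + s i) = 1)).card : ℝ) <
                (1 / 2) * (1 / 4 - β) * d) →
            c₁ = c₂) := fun F => Classical.propDecidable _
    rw [Nat.card_eq_fintype_card, hBad]
    convert Fintype.card_subtype _
  -- the union bound
  have hsub : Bad ⊆ (pairs ×ˢ ((univ : Finset (Fin l → ZMod 2)) ×ˢ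
      (univ : Finset (Fin l → ZMod 2)))).biUnion (fun q => eventSet n l d β q.1 q.2) := by
    intro F hF
    rw [hBad, mem_filter] at hF
    have hF2 := hF.2
    push_neg at hF2
    obtain ⟨s, c₁, hc₁, c₂, hc₂, ⟨t₁, ht₁F, hw₁⟩, ⟨t₂, ht₂F, hw₂⟩, hne⟩ := hF2
    rw [mem_biUnion]
    rcases lt_or_gt_of_ne (fun h : enc c₁ = enc c₂ => hne (hencinj h)) with hlt | hgt
    · refine ⟨((c₁, c₂), (t₁, t₂)), ?_, ?_⟩
      · rw [mem_product]
        refine ⟨?_, mem_product.mpr ⟨mem_univ _, mem_univ _⟩⟩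
        rw [hpairs, mem_filter]
        exact ⟨Finset.mem_offDiag.mpr ⟨hc₁, hc₂, hne⟩, hlt⟩
      · exact mem_eventSet F s c₁ c₂ t₁ t₂ ht₁F ht₂F hw₁ hw₂
    · refine ⟨((c₂, c₁), (t₂, t₁)), ?_, ?_⟩
      · rw [mem_product]
        refine ⟨?_, mem_product.mpr ⟨mem_univ _, mem_univ _⟩⟩
        rw [hpairs, mem_filter]
        exact ⟨Finset.mem_offDiag.mpr ⟨hc₂, hc₁, fun h => hne h.symm⟩, hgt⟩
      · exact mem_eventSet F s c₂ c₁ t₂ t₁ ht₂F ht₁F hw₂ hw₁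
  -- counting
  have hcount : (Bad.card : ℝ) ≤
      (m.choose 2 : ℝ) * 2 ^ (2 * l) * (2 ^ (l * n) * Real.exp (-(2 * d * β ^ 2))) := by
    have h1 : (Bad.card : ℝ) ≤
        ∑ q ∈ pairs ×ˢ ((univ : Finset (Fin l → ZMod 2)) ×ˢ (univ : Finset (Fin l → ZMod 2))),
          ((eventSet n l d β q.1 q.2).card : ℝ) := by
      have := le_trans (card_le_card hsub) (Finset.card_biUnion_le)
      calc (Bad.card : ℝ) ≤ ((∑ q ∈ pairs ×ˢ ((univ : Finset (Fin l → ZMod 2)) ×ˢ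
          (univ : Finset (Fin l → ZMod 2))), (eventSet n l d β q.1 q.2).card : ℕ) : ℝ) := by
            exact_mod_cast this
        _ = _ := by push_cast [Nat.cast_sum]; rfl
    refine le_trans h1 ?_
    have h2 : ∀ q ∈ pairs ×ˢ ((univ : Finset (Fin l → ZMod 2)) ×ˢ
        (univ : Finset (Fin l → ZMod 2))),
        ((eventSet n l d β q.1 q.2).card : ℝ) ≤ 2 ^ (l * n) * Real.exp (-(2 * d * β ^ 2)) := by
      intro q hq
      rw [mem_product] at hq
      have hq1 : q.1 ∈ C.offDiag := (mem_filter.mp hq.1).1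
      exact eventSet_card_le hβ0 hβ C hdist q.1 hq1 q.2
    refine le_trans (Finset.sum_le_card_nsmul _ _ _ h2) ?_
    rw [nsmul_eq_mul]
    have hcards : ((pairs ×ˢ ((univ : Finset (Fin l → ZMod 2)) ×ˢ
        (univ : Finset (Fin l → ZMod 2)))).card : ℝ) = (m.choose 2 : ℝ) * 2 ^ (2 * l) := by
      rw [card_product, card_product, card_univ]
      have : Fintype.card (Fin l → ZMod 2) = 2 ^ l := by simp
      rw [this, hpairs, pairs_card C enc hencinj, hcard]
      push_cast
      rw [two_mul, pow_add]
      try ring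
    rw [hcards]
    try rw [mul_assoc]
  -- finish
  rw [hcardeq, div_le_iff₀ (by positivity)]
  calc (Bad.card : ℝ) ≤ (m.choose 2 : ℝ) * 2 ^ (2 * l) * (2 ^ (l * n) * Real.exp (-(2 * d * β ^ 2))) := hcount
    _ = (m.choose 2 : ℝ) * 2 ^ (2 * l) * Real.exp (-(2 * d * β ^ 2)) * 2 ^ (l * n) := by ring
end

section
/- Let 𝒳 and 𝒴 be finite sets, let P_{XY} be a probability distribution on 𝒳 × 𝒴, and for each (x,y) with P_{XY}(x,y) > 0 let ρ_E^{x,y} be a density matrix on ℂ^d. Define, for each x, the density matrix ρ_{YE}^x := Σ_y P_{Y|X}(y|x) · |y⟩⟨y| ⊗ ρ_E^{x,y} on ℂ^{|𝒴|} ⊗ ℂ^d, where {|y⟩}_{y∈𝒴} is the standard basis of ℂ^{|𝒴|}. Then p_guess(X|YE) = Σ_y P_Y(y) · p_guess(X|E, Y=y), where p_guess(X|YE) := sup over POVMs {M_x}_{x∈𝒳} on ℂ^{|𝒴|} ⊗ ℂ^d of Σ_x P_X(x)·tr(M_x ρ_{YE}^x), and p_guess(X|E, Y=y) := sup over POVMs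 {N_x}_{x∈𝒳} on ℂ^d of Σ_x P_{X|Y}(x|y)·tr(N_x ρ_E^{x,y}). -/
open scoped ComplexOrder Kronecker Matrix Pointwise

set_option linter.unusedSectionVars false


namespace Stmt14Aux

/-! ### Real analysis helpers -/

lemma mul_div_cancel_cond {c p : ℝ} (h : c = 0 → p = 0) : c * (p / c) = p := by
  rcases eq_or_ne c 0 with h0 | h0
  · simp [h0, h h0]
  · field_simp

/-- Sup of independent sums equals sum of sups. -/
lemma sSup_indep_sum {ι : Type*} [Fintype ι] (S : ι → Set ℝ)
    (hne : ∀ i, (S i).Nonempty) (hbdd : ∀ i, BddAbove (S i)) :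
    sSup {r | ∃ s : ι → ℝ, (∀ i, s i ∈ S i) ∧ r = ∑ i, s i} = ∑ i, sSup (S i) := by
  set T : Set ℝ := {r | ∃ s : ι → ℝ, (∀ i, s i ∈ S i) ∧ r = ∑ i, s i} with hT
  have hTne : T.Nonempty := by
    choose s hs using hne
    exact ⟨∑ i, s i, s, hs, rfl⟩
  have hub : (∑ i, sSup (S i)) ∈ upperBounds T := by
    rintro r ⟨s, hs, rfl⟩
    exact Finset.sum_le_sum fun i _ => le_csSup (hbdd i) (hs i)
  refine le_antisymm (csSup_le hTne hub) ?_
  rcases isEmpty_or_nonempty ι with hι | hι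
  · have : T = {0} := by
      ext r
      constructor
      · rintro ⟨s, _, rfl⟩; simp
      · rintro rfl; exact ⟨fun i => (hι.elim i), fun i => (hι.elim i), by simp⟩
    simp [this]
  · refine le_of_forall_pos_le_add fun ε hε => ?_
    have hcard : (0 : ℝ) < Fintype.card ι := by
      exact_mod_cast Fintype.card_pos
    set ε' : ℝ := ε / Fintype.card ι with hε'
    have hε'pos : 0 < ε' := div_pos hε hcard
    have : ∀ i, ∃ t ∈ S i, sSup (S i) - ε' < t := fun i =>
      exists_lt_of_lt_csSup (hne i) (sub_lt_self _ hε'pos)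
    choose s hsmem hslt using this
    have h1 : ∑ i, sSup (S i) ≤ (∑ i, s i) + ε := by
      have : ∑ i, sSup (S i) ≤ ∑ i, (s i + ε') :=
        Finset.sum_le_sum fun i _ => by linarith [hslt i]
      rw [Finset.sum_add_distrib] at this
      have h2 : ∑ _i : ι, ε' = ε := by
        rw [Finset.sum_const, Finset.card_univ, nsmul_eq_mul, hε']
        field_simp
      linarith [this, h2.le]
    have h3 : (∑ i, s i) ≤ sSup T := le_csSup ⟨_, hub⟩ ⟨s, hsmem, rfl⟩
    linarith

/-! ### Matrix helpers -/

variable {n : Type*} [Fintype n] [DecidableEq n]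

lemma trace_re_nonneg {A : Matrix n n ℂ} (hA : A.PosSemidef) : 0 ≤ A.trace.re := by
  rw [Matrix.trace, Complex.re_sum]
  refine Finset.sum_nonneg fun i _ => ?_
  have h := hA.re_dotProduct_nonneg (Pi.single i 1)
  have h2 : dotProduct (star (Pi.single i 1)) (A *ᵥ (Pi.single i 1)) = A i i := by
    simp [dotProduct, Matrix.mulVec_single, Pi.single_apply, apply_ite]
  rw [h2] at h
  exact h

open scoped MatrixOrder in
lemma trace_mul_re_nonneg {A B : Matrix n n ℂ} (hA : A.PosSemidef) (hB : B.PosSemidef) :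
    0 ≤ ((A * B).trace).re := by
  obtain ⟨C, hC⟩ := CStarAlgebra.nonneg_iff_eq_star_mul_self.mp hA.nonneg
  have h1 : (A * B).trace = (C * B * Cᴴ).trace := by
    rw [hC]; exact (Matrix.trace_mul_cycle C B Cᴴ).symm
  rw [h1]
  exact trace_re_nonneg (hB.mul_mul_conjTranspose_same C)

lemma posSemidef_sum {ι : Type*} (s : Finset ι) (f : ι → Matrix n n ℂ)
    (h : ∀ i ∈ s, (f i).PosSemidef) : (∑ i ∈ s, f i).PosSemidef :=
  Finset.sum_induction f Matrix.PosSemidef (fun _ _ ha hb => ha.add hb) .zero h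

variable {𝒴 : Type*} [Fintype 𝒴] [DecidableEq 𝒴] {d : ℕ}

def emb (𝒴 : Type*) [DecidableEq 𝒴] (d : ℕ) (y : 𝒴) : Matrix (𝒴 × Fin d) (Fin d) ℂ :=
  fun p i => if p = (y, i) then 1 else 0

lemma blk_apply (y : 𝒴) (M : Matrix (𝒴 × Fin d) (𝒴 × Fin d) ℂ) (i j : Fin d) :
    ((emb 𝒴 d y)ᴴ * M * emb 𝒴 d y) i j = M (y, i) (y, j) := by
  simp [Matrix.mul_apply, emb, Finset.sum_ite_eq, Prod.ext_iff, apply_ite, ite_mul, mul_ite,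
    ite_and, Finset.sum_ite_eq', Fintype.sum_prod_type]

lemma emb_conjTranspose_mul_emb (y : 𝒴) : (emb 𝒴 d y)ᴴ * emb 𝒴 d y = 1 := by
  ext i j
  simp [Matrix.mul_apply, emb, Prod.ext_iff, apply_ite, Matrix.one_apply, ite_mul, mul_ite,
    ite_and, Finset.sum_ite_eq, Finset.sum_ite_eq', Fintype.sum_prod_type]
  split <;> simp_all [eq_comm]

lemma sum_emb_mul_emb_conjTranspose :
    ∑ y : 𝒴, emb 𝒴 d y * (emb 𝒴 d y)ᴴ = 1 := by
  ext p q
  simp [Matrix.sum_apply, Matrix.mul_apply, emb, Prod.ext_iff, apply_ite, Matrix.one_apply,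
    ite_and, ite_mul, mul_ite, Finset.sum_ite_eq, Finset.sum_ite_eq']
  aesop

lemma emb_mul_mul_apply (y : 𝒴) (N : Matrix (Fin d) (Fin d) ℂ) (p q : 𝒴 × Fin d) :
    (emb 𝒴 d y * N * (emb 𝒴 d y)ᴴ) p q = if p.1 = y ∧ q.1 = y then N p.2 q.2 else 0 := by
  obtain ⟨a, i⟩ := p; obtain ⟨b, j⟩ := q
  simp [Matrix.mul_apply, emb, Prod.ext_iff, apply_ite, ite_mul, mul_ite, ite_and,
    Finset.sum_ite_eq, Finset.sum_ite_eq']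
  aesop

lemma blk_diag (y : 𝒴) (N : 𝒴 → Matrix (Fin d) (Fin d) ℂ) :
    (emb 𝒴 d y)ᴴ * (∑ y', emb 𝒴 d y' * N y' * (emb 𝒴 d y')ᴴ) * emb 𝒴 d y = N y := by
  ext i j
  rw [blk_apply, Matrix.sum_apply]
  simp [emb_mul_mul_apply]

lemma trace_mul_kron (y : 𝒴) (M : Matrix (𝒴 × Fin d) (𝒴 × Fin d) ℂ)
    (B : Matrix (Fin d) (Fin d) ℂ) :
    (M * (Matrix.single y y (1 : ℂ) ⊗ₖ B)).trace
      = ((emb 𝒴 d y)ᴴ * M * emb 𝒴 d y * B).trace := by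
  have hb : (emb 𝒴 d y)ᴴ * M * emb 𝒴 d y = Matrix.of (fun i j => M (y, i) (y, j)) := by
    ext i j; exact blk_apply y M i j
  rw [hb]
  simp [Matrix.trace, Matrix.diag, Matrix.mul_apply, Matrix.kroneckerMap_apply,
    Matrix.single, Fintype.sum_prod_type, ite_and, ite_mul, mul_ite,
    Finset.sum_ite_eq, Finset.sum_ite_eq']

end Stmt14Aux

open Stmt14Aux


open Stmt14Aux


/-- The cq-state `ρ_{YE}^x = ∑_y P_{Y|X}(y|x) |y⟩⟨y| ⊗ ρ_E^{x,y}` on `ℂ^|𝒴| ⊗ ℂ^d`. -/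
noncomputable def rhoYE {𝒳 𝒴 : Type*} [Fintype 𝒳] [Fintype 𝒴] [DecidableEq 𝒴] {d : ℕ}
    (P : 𝒳 → 𝒴 → ℝ) (ρ : 𝒳 → 𝒴 → Matrix (Fin d) (Fin d) ℂ) (x : 𝒳) :
    Matrix (𝒴 × Fin d) (𝒴 × Fin d) ℂ :=
  ∑ y, ((P x y / ∑ y', P x y' : ℝ) : ℂ) • (Matrix.single y y (1 : ℂ) ⊗ₖ ρ x y)

section Main

variable {𝒳 𝒴 : Type*} [Fintype 𝒳] [Fintype 𝒴] [DecidableEq 𝒴] {d : ℕ}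

/-- the per-x trace decomposition -/
lemma trace_rhoYE (P : 𝒳 → 𝒴 → ℝ) (ρ : 𝒳 → 𝒴 → Matrix (Fin d) (Fin d) ℂ) (x : 𝒳)
    (M : Matrix (𝒴 × Fin d) (𝒴 × Fin d) ℂ) :
    ((M * rhoYE P ρ x).trace).re
      = ∑ y, (P x y / ∑ y', P x y') * (((emb 𝒴 d y)ᴴ * M * emb 𝒴 d y * ρ x y).trace).re := by
  rw [rhoYE, Matrix.mul_sum, Matrix.trace_sum, Complex.re_sum]
  refine Finset.sum_congr rfl fun y _ => ?_
  rw [Matrix.mul_smul, Matrix.trace_smul, trace_mul_kron]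
  rw [smul_eq_mul, Complex.re_ofReal_mul]

/-- rewriting the global objective as a double sum -/
lemma obj_eq (P : 𝒳 → 𝒴 → ℝ) (hP : ∀ x y, 0 ≤ P x y)
    (ρ : 𝒳 → 𝒴 → Matrix (Fin d) (Fin d) ℂ) (M : 𝒳 → Matrix (𝒴 × Fin d) (𝒴 × Fin d) ℂ) :
    ∑ x, (∑ y, P x y) * ((M x * rhoYE P ρ x).trace).re
      = ∑ y, ∑ x, P x y * (((emb 𝒴 d y)ᴴ * M x * emb 𝒴 d y * ρ x y).trace).re := by
  have key : ∀ x, (∑ y, P x y) * ((M x * rhoYE P ρ x).trace).re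
      = ∑ y, P x y * (((emb 𝒴 d y)ᴴ * M x * emb 𝒴 d y * ρ x y).trace).re := by
    intro x
    rw [trace_rhoYE, Finset.mul_sum]
    refine Finset.sum_congr rfl fun y _ => ?_
    rw [← mul_assoc, mul_div_cancel_cond]
    intro h0
    exact (Finset.sum_eq_zero_iff_of_nonneg (fun y' _ => hP x y')).mp h0 y (Finset.mem_univ y)
  rw [Finset.sum_congr rfl fun x _ => key x]
  exact Finset.sum_comm

end Main


/-- Averaging property of the guessing probability with quantum side information:
`p_guess(X|YE) = ∑_y P_Y(y)·p_guess(X|E, Y=y)`, where the guessing probabilities are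
suprema over POVMs. -/
theorem stmt14 {𝒳 𝒴 : Type*} [Fintype 𝒳] [Fintype 𝒴] [DecidableEq 𝒴] {d : ℕ}
    (P : 𝒳 → 𝒴 → ℝ) (hP : ∀ x y, 0 ≤ P x y) (hsum : ∑ x, ∑ y, P x y = 1)
    (ρ : 𝒳 → 𝒴 → Matrix (Fin d) (Fin d) ℂ)
    (hρ : ∀ x y, 0 < P x y → (ρ x y).PosSemidef ∧ (ρ x y).trace = 1) :
    sSup {r : ℝ | ∃ M : 𝒳 → Matrix (𝒴 × Fin d) (𝒴 × Fin d) ℂ,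
        (∀ x, (M x).PosSemidef) ∧ (∑ x, M x = 1) ∧
        r = ∑ x, (∑ y, P x y) * (Matrix.trace (M x * rhoYE P ρ x)).re}
    = ∑ y, (∑ x, P x y) *
        sSup {r : ℝ | ∃ N : 𝒳 → Matrix (Fin d) (Fin d) ℂ,
          (∀ x, (N x).PosSemidef) ∧ (∑ x, N x = 1) ∧
          r = ∑ x, (P x y / ∑ x', P x' y) * (Matrix.trace (N x * ρ x y)).re} := by
  classical
  have h𝒳 : Nonempty 𝒳 := by
    by_contra h
    rw [not_nonempty_iff] at h
    simp [Finset.univ_eq_empty] at hsum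
  obtain ⟨x0⟩ := h𝒳
  -- a canonical POVM on ℂ^d
  set N0 : 𝒳 → Matrix (Fin d) (Fin d) ℂ := fun x => if x = x0 then 1 else 0 with hN0
  have hN0psd : ∀ x, (N0 x).PosSemidef := by
    intro x; rw [hN0]; dsimp only; split
    · exact Matrix.PosSemidef.one
    · exact Matrix.PosSemidef.zero
  have hN0sum : ∑ x, N0 x = 1 := by
    rw [hN0]; simp [Finset.sum_ite_eq']
  -- the per-y (unnormalized) value sets
  set S : 𝒴 → Set ℝ := fun y => {r | ∃ N : 𝒳 → Matrix (Fin d) (Fin d) ℂ,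
      (∀ x, (N x).PosSemidef) ∧ (∑ x, N x = 1) ∧
      r = ∑ x, P x y * ((N x * ρ x y).trace).re} with hS
  have hne : ∀ y, (S y).Nonempty := fun y => ⟨_, N0, hN0psd, hN0sum, rfl⟩
  have hbdd : ∀ y, BddAbove (S y) := by
    intro y
    refine ⟨∑ x, P x y, ?_⟩
    rintro r ⟨N, h1, h2, rfl⟩
    refine Finset.sum_le_sum fun x _ => ?_
    rcases (hP x y).eq_or_lt with hxy | hxy
    · rw [← hxy]; simp
    · have hρ' := hρ x y hxy
      have hsub : (1 : Matrix (Fin d) (Fin d) ℂ) - N x = ∑ x' ∈ Finset.univ.erase x, N x' := by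
        rw [Finset.sum_erase_eq_sub (Finset.mem_univ x), h2]
      have hpsd1 : ((1 : Matrix (Fin d) (Fin d) ℂ) - N x).PosSemidef := by
        rw [hsub]; exact posSemidef_sum _ _ fun i _ => h1 i
      have h3 : 0 ≤ ((((1 : Matrix (Fin d) (Fin d) ℂ) - N x) * ρ x y).trace).re :=
        trace_mul_re_nonneg hpsd1 hρ'.1
      rw [Matrix.sub_mul, Matrix.one_mul, Matrix.trace_sub, Complex.sub_re, hρ'.2] at h3
      simp only [Complex.one_re] at h3
      nlinarith
  -- rewrite the global set as the set of sums
  have hsetEq : {r : ℝ | ∃ M : 𝒳 → Matrix (𝒴 × Fin d) (𝒴 × Fin d) ℂ,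
        (∀ x, (M x).PosSemidef) ∧ (∑ x, M x = 1) ∧
        r = ∑ x, (∑ y, P x y) * (Matrix.trace (M x * rhoYE P ρ x)).re}
      = {r | ∃ s : 𝒴 → ℝ, (∀ y, s y ∈ S y) ∧ r = ∑ y, s y} := by
    ext r
    simp only [Set.mem_setOf_eq]
    constructor
    · rintro ⟨M, h1, h2, rfl⟩
      refine ⟨fun y => ∑ x, P x y * (((emb 𝒴 d y)ᴴ * M x * emb 𝒴 d y * ρ x y).trace).re,
        fun y => ⟨fun x => (emb 𝒴 d y)ᴴ * M x * emb 𝒴 d y,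
          fun x => (h1 x).conjTranspose_mul_mul_same _, ?_, rfl⟩, obj_eq P hP ρ M⟩
      show ∑ x, (emb 𝒴 d y)ᴴ * M x * emb 𝒴 d y = 1
      rw [← Matrix.sum_mul, ← Matrix.mul_sum, h2, Matrix.mul_one, emb_conjTranspose_mul_emb]
    · rintro ⟨s, hs, rfl⟩
      choose N h1 h2 h3 using hs
      refine ⟨fun x => ∑ y, emb 𝒴 d y * N y x * (emb 𝒴 d y)ᴴ,
        fun x => posSemidef_sum _ _ fun y _ => (h1 y x).mul_mul_conjTranspose_same _, ?_, ?_⟩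
      · rw [Finset.sum_comm]
        have : ∀ y : 𝒴, ∑ x, emb 𝒴 d y * N y x * (emb 𝒴 d y)ᴴ
            = emb 𝒴 d y * (emb 𝒴 d y)ᴴ := by
          intro y
          rw [← Matrix.sum_mul, ← Matrix.mul_sum, h2 y, Matrix.mul_one]
        rw [Finset.sum_congr rfl fun y _ => this y, sum_emb_mul_emb_conjTranspose]
      · rw [obj_eq P hP ρ]
        refine Finset.sum_congr rfl fun y _ => ?_
        rw [h3 y]
        refine Finset.sum_congr rfl fun x _ => ?_
        rw [blk_diag y (fun y' => N y' x)]
  rw [hsetEq, sSup_indep_sum S hne hbdd]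
  refine Finset.sum_congr rfl fun y _ => ?_
  -- per-y scaling
  set c : ℝ := ∑ x, P x y with hc
  have hc0 : c = 0 → ∀ x, P x y = 0 := by
    intro h0 x
    exact (Finset.sum_eq_zero_iff_of_nonneg (fun x' _ => hP x' y)).mp h0 x (Finset.mem_univ x)
  have hcancel : ∀ (x : 𝒳) (t : ℝ), c * ((P x y / c) * t) = P x y * t := by
    intro x t
    rw [← mul_assoc, mul_div_cancel_cond (fun h0 => hc0 h0 x)]
  have hsmul : c • {r : ℝ | ∃ N : 𝒳 → Matrix (Fin d) (Fin d) ℂ,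
      (∀ x, (N x).PosSemidef) ∧ (∑ x, N x = 1) ∧
      r = ∑ x, (P x y / ∑ x', P x' y) * (Matrix.trace (N x * ρ x y)).re} = S y := by
    ext r
    constructor
    · rintro ⟨a, ⟨N, h1, h2, rfl⟩, rfl⟩
      refine ⟨N, h1, h2, ?_⟩
      simp only [smul_eq_mul]
      rw [Finset.mul_sum]
      exact Finset.sum_congr rfl fun x _ => hcancel x _
    · rintro ⟨N, h1, h2, rfl⟩
      refine ⟨∑ x, (P x y / ∑ x', P x' y) * (Matrix.trace (N x * ρ x y)).re,
        ⟨N, h1, h2, rfl⟩, ?_⟩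
      simp only [smul_eq_mul]
      rw [Finset.mul_sum]
      exact Finset.sum_congr rfl fun x _ => hcancel x _
  have hcnn : 0 ≤ c := Finset.sum_nonneg fun x _ => hP x y
  calc sSup (S y) = sSup (c • {r : ℝ | ∃ N : 𝒳 → Matrix (Fin d) (Fin d) ℂ,
          (∀ x, (N x).PosSemidef) ∧ (∑ x, N x = 1) ∧
          r = ∑ x, (P x y / ∑ x', P x' y) * (Matrix.trace (N x * ρ x y)).re}) := by rw [hsmul]
    _ = _ := by rw [Real.sSup_smul_of_nonneg hcnn, smul_eq_mul]
end

section
/- Let 𝒳 and 𝒴 be finite sets, let P_{XY} be a probability distribution on 𝒳 × 𝒴, and for each (x,y) with P_{XY}(x,y) > 0 let ρ_E^{x,y} be a density matrix on ℂ^d. Define ρ_{YE}^x := Σ_y P_{Y|X}(y|x) · |y⟩⟨y| ⊗ ρ_E^{x,y} on ℂ^{|𝒴|} ⊗ ℂ^d, and let ρ_E := Σ_{x,y} P_{XY}(x,y) · ρ_E^{x,y}. Then p_guess(X|YE) ≤ rank(ρ_E) · p_guess(X|Y), where p_guess(X|YE) := sup over POVMs {M_x}_{x∈𝒳} on ℂ^{|𝒴|}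 ⊗ ℂ^d of Σ_x P_X(x)·tr(M_x ρ_{YE}^x) and p_guess(X|Y) := Σ_y P_Y(y) · max_x P_{X|Y}(x|y). Equivalently, in entropy form, H_min(X|YE) ≥ H_min(X|Y) − H_max(E), where H_min denotes minus the base-2 logarithm of the corresponding guessing probability and H_max(E) := log₂ rank(ρ_E). -/
open scoped ComplexOrder Kronecker

set_option linter.unusedSectionVars false
set_option maxHeartbeats 1000000

section AuxStmt16

open Matrix

variable {n : Type*} [Fintype n] [DecidableEq n]

private lemma auxPsdTraceNonneg16 {A : Matrix n n ℂ} (hA : A.PosSemidef) : 0 ≤ A.trace := by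
  have h : ∀ i, 0 ≤ A i i := by
    intro i
    have := hA.dotProduct_mulVec_nonneg (Pi.single i 1)
    simpa [dotProduct, Matrix.mulVec_single, Pi.single_apply, apply_ite] using this
  exact Finset.sum_nonneg fun i _ => h i

private lemma auxTraceMulNonneg16 {A B : Matrix n n ℂ} (hA : A.PosSemidef) (hB : B.PosSemidef) :
    0 ≤ (A * B).trace := by
  open scoped MatrixOrder in
  obtain ⟨C, rfl⟩ := CStarAlgebra.nonneg_iff_eq_star_mul_self.mp hB.nonneg
  rw [← Matrix.mul_assoc, Matrix.trace_mul_cycle]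
  exact auxPsdTraceNonneg16 (hA.mul_mul_conjTranspose_same C)

private lemma auxTraceMulReNonneg16 {A B : Matrix n n ℂ} (hA : A.PosSemidef)
    (hB : B.PosSemidef) : 0 ≤ ((A * B).trace).re :=
  (Complex.le_def.mp (auxTraceMulNonneg16 hA hB)).1

private lemma auxSmulPsd16 {A : Matrix n n ℂ} (hA : A.PosSemidef) {c : ℝ} (hc : 0 ≤ c) :
    ((c : ℂ) • A).PosSemidef := by
  refine .of_dotProduct_mulVec_nonneg ?_ ?_
  · unfold Matrix.IsHermitian
    rw [Matrix.conjTranspose_smul, hA.1.eq]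
    norm_num
  · intro v
    rw [Matrix.smul_mulVec, dotProduct_smul, smul_eq_mul]
    exact mul_nonneg (Complex.zero_le_real.mpr hc) (hA.dotProduct_mulVec_nonneg v)

private lemma auxSumPsd16 {ι : Type*} (s : Finset ι) (f : ι → Matrix n n ℂ)
    (h : ∀ i ∈ s, (f i).PosSemidef) : (∑ i ∈ s, f i).PosSemidef :=
  Finset.sum_induction f _ (fun _ _ ha hb => ha.add hb) Matrix.PosSemidef.zero h

private lemma auxTraceEqSumEig16 {A : Matrix n n ℂ} (hA : A.IsHermitian) :
    A.trace = ∑ i, (hA.eigenvalues i : ℂ) := by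
  conv_lhs => rw [hA.spectral_theorem, Unitary.conjStarAlgAut_apply]
  rw [Matrix.trace_mul_cycle, (Unitary.mem_iff.mp hA.eigenvectorUnitary.2).1, Matrix.one_mul,
    Matrix.trace_diagonal]
  rfl

private lemma auxQuadLeOfTraceOne16 {A : Matrix n n ℂ} (hA : A.PosSemidef) (ht : A.trace = 1)
    (v : n → ℂ) : star v ⬝ᵥ A *ᵥ v ≤ star v ⬝ᵥ v := by
  have hH := hA.1
  have hsum : ∑ i, hH.eigenvalues i = 1 := by
    have h2 := auxTraceEqSumEig16 hH
    rw [ht] at h2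
    have h3 : ((∑ i, hH.eigenvalues i : ℝ) : ℂ) = ((1 : ℝ) : ℂ) := by
      push_cast
      simpa using h2.symm
    exact_mod_cast h3
  have hev : ∀ i, hH.eigenvalues i ≤ 1 := by
    intro i
    calc hH.eigenvalues i ≤ ∑ j, hH.eigenvalues j :=
          Finset.single_le_sum (fun j _ => hA.eigenvalues_nonneg j) (Finset.mem_univ i)
      _ = 1 := hsum
  have h1 : ((1 : Matrix n n ℂ) - A).PosSemidef := by
    have hU1 : (hH.eigenvectorUnitary : Matrix n n ℂ) *
        (star (hH.eigenvectorUnitary : Matrix n n ℂ)) = 1 :=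
      (Unitary.mem_iff.mp hH.eigenvectorUnitary.2).2
    have hdiag : Matrix.diagonal (fun i => ((1 - hH.eigenvalues i : ℝ) : ℂ)) =
        1 - Matrix.diagonal (RCLike.ofReal ∘ hH.eigenvalues) := by
      ext i j
      rcases eq_or_ne i j with rfl | h
      · push_cast
        simp [Matrix.one_apply]
      · simp [Matrix.diagonal_apply_ne _ h, Matrix.one_apply_ne h]
    have key : (1 : Matrix n n ℂ) - A =
        (hH.eigenvectorUnitary : Matrix n n ℂ) *
          Matrix.diagonal (fun i => ((1 - hH.eigenvalues i : ℝ) : ℂ)) *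
          (star (hH.eigenvectorUnitary : Matrix n n ℂ)) := by
      conv_lhs => rw [hH.spectral_theorem, Unitary.conjStarAlgAut_apply]
      rw [hdiag, Matrix.mul_sub, Matrix.mul_one, Matrix.sub_mul, hU1, Matrix.mul_assoc]
    rw [key]
    exact (Matrix.posSemidef_diagonal_iff.mpr fun i =>
      Complex.zero_le_real.mpr (by linarith [hev i])).mul_mul_conjTranspose_same _
  have h4 := h1.dotProduct_mulVec_nonneg v
  rw [Matrix.sub_mulVec, dotProduct_sub, Matrix.one_mulVec] at h4
  exact sub_nonneg.mp h4

private lemma auxSupportProj16 {A : Matrix n n ℂ} (hA : A.PosSemidef) :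
    ∃ Pi : Matrix n n ℂ, Pi.PosSemidef ∧ Pi.trace = (A.rank : ℂ) ∧
      ∀ B : Matrix n n ℂ, B.PosSemidef → B.trace = 1 →
        ∀ c : ℝ, 0 < c → (A - (c : ℂ) • B).PosSemidef → (Pi - B).PosSemidef := by
  have hH := hA.1
  set U : Matrix n n ℂ := (hH.eigenvectorUnitary : Matrix n n ℂ) with hU
  have hU1 : star U * U = 1 := (Unitary.mem_iff.mp hH.eigenvectorUnitary.2).1
  have hU2 : U * star U = 1 := (Unitary.mem_iff.mp hH.eigenvectorUnitary.2).2
  set g : n → ℂ := fun i => if hH.eigenvalues i ≠ 0 then 1 else 0 with hg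
  set Pi : Matrix n n ℂ := U * Matrix.diagonal g * star U with hPi
  have hgg : ∀ i, g i * g i = g i := by
    intro i; simp only [hg]; split_ifs <;> simp
  have hPiPsd : Pi.PosSemidef := by
    refine (Matrix.posSemidef_diagonal_iff.mpr fun i => ?_).mul_mul_conjTranspose_same U
    simp only [hg]; split_ifs <;> simp
  have hPiProj : Pi * Pi = Pi := by
    rw [hPi]
    calc U * Matrix.diagonal g * star U * (U * Matrix.diagonal g * star U)
        = U * Matrix.diagonal g * (star U * U) * Matrix.diagonal g * star U := by
          simp only [Matrix.mul_assoc]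
      _ = U * (Matrix.diagonal g * Matrix.diagonal g) * star U := by
          rw [hU1]; simp only [Matrix.mul_one, Matrix.mul_assoc]
      _ = U * Matrix.diagonal g * star U := by
          rw [Matrix.diagonal_mul_diagonal, show (fun i => g i * g i) = g from funext hgg]
  have hAPi : A * Pi = A := by
    conv_lhs => rw [hH.spectral_theorem, Unitary.conjStarAlgAut_apply]
    rw [hPi]
    calc U * Matrix.diagonal (RCLike.ofReal ∘ hH.eigenvalues) * star U *
          (U * Matrix.diagonal g * star U)
        = U * Matrix.diagonal (RCLike.ofReal ∘ hH.eigenvalues) * (star U * U) *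
            Matrix.diagonal g * star U := by simp only [Matrix.mul_assoc]
      _ = U * (Matrix.diagonal (RCLike.ofReal ∘ hH.eigenvalues) * Matrix.diagonal g) * star U := by
          rw [hU1]; simp only [Matrix.mul_one, Matrix.mul_assoc]
      _ = U * Matrix.diagonal (RCLike.ofReal ∘ hH.eigenvalues) * star U := by
          rw [Matrix.diagonal_mul_diagonal,
            show (fun i => (RCLike.ofReal ∘ hH.eigenvalues) i * g i)
              = RCLike.ofReal ∘ hH.eigenvalues from funext fun i => by
                simp only [hg, Function.comp_apply]
                split_ifs with h
                · simp
                · push_neg at h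
                  simp [h]]
      _ = A := (hH.spectral_theorem).symm
  have hPiTr : Pi.trace = (A.rank : ℂ) := by
    rw [hPi, Matrix.trace_mul_cycle, hU1, Matrix.one_mul, Matrix.trace_diagonal,
      hH.rank_eq_card_non_zero_eigs]
    rw [Fintype.card_subtype]
    simp [hg, Finset.sum_ite, Finset.filter_ne]
  refine ⟨Pi, hPiPsd, hPiTr, ?_⟩
  intro B hB htB c hc hle
  have hPiH : Piᴴ = Pi := hPiPsd.1
  refine .of_dotProduct_mulVec_nonneg ?_ ?_
  · exact (hPiPsd.1.sub hB.1)
  intro v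
  set w : n → ℂ := Pi *ᵥ v with hw
  set u : n → ℂ := v - w with hu
  have hvwu : v = w + u := by rw [hu]; abel
  have hAu : A *ᵥ u = 0 := by
    rw [hu, Matrix.mulVec_sub, hw, Matrix.mulVec_mulVec, hAPi, sub_self]
  have hBu : B *ᵥ u = 0 := by
    have h1 : star u ⬝ᵥ ((c : ℂ) • B) *ᵥ u ≤ star u ⬝ᵥ A *ᵥ u := by
      have := hle.dotProduct_mulVec_nonneg u
      rw [Matrix.sub_mulVec, dotProduct_sub] at this
      exact sub_nonneg.mp this
    rw [hAu, dotProduct_zero] at h1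
    have h2 : 0 ≤ star u ⬝ᵥ ((c : ℂ) • B) *ᵥ u := by
      rw [Matrix.smul_mulVec, dotProduct_smul, smul_eq_mul]
      exact mul_nonneg (Complex.zero_le_real.mpr hc.le) (hB.dotProduct_mulVec_nonneg u)
    have h3 : star u ⬝ᵥ ((c : ℂ) • B) *ᵥ u = 0 := le_antisymm h1 h2
    rw [Matrix.smul_mulVec, dotProduct_smul, smul_eq_mul, mul_eq_zero] at h3
    rcases h3 with h3 | h3
    · exact absurd (Complex.ofReal_eq_zero.mp h3) (ne_of_gt hc)
    · exact (hB.dotProduct_mulVec_zero_iff u).mp h3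
  have hstaru : star u ᵥ* B = 0 := by
    have : star (B *ᵥ u) = star u ᵥ* Bᴴ := by rw [Matrix.star_mulVec]
    rw [hBu, hB.1.eq] at this
    simpa using this.symm
  have hq1 : star v ⬝ᵥ B *ᵥ v = star w ⬝ᵥ B *ᵥ w := by
    have hBv : B *ᵥ v = B *ᵥ w := by
      rw [hvwu, Matrix.mulVec_add, hBu, add_zero]
    rw [hBv, hvwu]
    rw [show star (w + u) = star w + star u from star_add w u, add_dotProduct]
    have : star u ⬝ᵥ B *ᵥ w = 0 := by
      rw [Matrix.dotProduct_mulVec, hstaru, zero_dotProduct]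
    rw [this, add_zero]
  have hq2 : star v ⬝ᵥ Pi *ᵥ v = star w ⬝ᵥ w := by
    have hPw : Pi *ᵥ w = w := by
      rw [hw, Matrix.mulVec_mulVec, hPiProj]
    calc star v ⬝ᵥ Pi *ᵥ v = star v ⬝ᵥ Pi *ᵥ w := by conv_rhs => rw [hPw]
      _ = (star v ᵥ* Pi) ⬝ᵥ w := (Matrix.dotProduct_mulVec _ _ _)
      _ = star w ⬝ᵥ w := by
          have h5 : star (Pi *ᵥ v) = star v ᵥ* Piᴴ := by rw [Matrix.star_mulVec]
          rw [hPiH] at h5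
          rw [← h5]
  have hq3 : star w ⬝ᵥ B *ᵥ w ≤ star w ⬝ᵥ w := auxQuadLeOfTraceOne16 hB htB w
  have hfin : star v ⬝ᵥ B *ᵥ v ≤ star v ⬝ᵥ Pi *ᵥ v := by rw [hq1, hq2]; exact hq3
  rw [Matrix.sub_mulVec, dotProduct_sub]
  exact sub_nonneg.mpr hfin

private lemma auxTraceKron16 {𝒴 : Type*} [Fintype 𝒴] [DecidableEq 𝒴] {d : ℕ}
    (M : Matrix (𝒴 × Fin d) (𝒴 × Fin d) ℂ) (y : 𝒴) (B : Matrix (Fin d) (Fin d) ℂ) :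
    (M * (Matrix.single y y (1 : ℂ) ⊗ₖ B)).trace
      = (M.submatrix (fun i => (y, i)) (fun i => (y, i)) * B).trace := by
  simp only [Matrix.trace, Matrix.diag, Matrix.mul_apply, Matrix.kroneckerMap_apply,
    Matrix.single, Matrix.submatrix_apply, Matrix.of_apply]
  rw [Fintype.sum_prod_type]
  simp only [Fintype.sum_prod_type]
  rw [Finset.sum_comm]
  simp [Finset.sum_ite_eq, mul_ite, ite_mul, Finset.mul_sum, mul_comm]
  refine Finset.sum_congr rfl fun i _ => ?_
  rw [Finset.sum_eq_single y (fun b _ hb => Finset.sum_eq_zero fun c _ => by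
        simp [Ne.symm hb]) (by simp)]
  rw [Finset.sum_eq_single y (fun b _ hb => by simp [Ne.symm hb]) (by simp)]
  simp

private lemma auxSubOne16 {𝒴 : Type*} [Fintype 𝒴] [DecidableEq 𝒴] {d : ℕ} (y : 𝒴) :
    (1 : Matrix (𝒴 × Fin d) (𝒴 × Fin d) ℂ).submatrix (fun i => (y, i)) (fun i => (y, i))
      = (1 : Matrix (Fin d) (Fin d) ℂ) := by
  ext i j
  simp [Matrix.one_apply, Prod.ext_iff]

end AuxStmt16

/-- Chain-rule bound for the guessing probability:
`p_guess(X|YE) ≤ rank(ρ_E) · p_guess(X|Y)`, where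
`p_guess(X|Y) = ∑_y P_Y(y)·max_x P_{X|Y}(x|y)` and
`ρ_E = ∑_{x,y} P(x,y)·ρ_E^{x,y}`. (Equivalently,
`H_min(X|YE) ≥ H_min(X|Y) − H_max(E)` with `H_max(E) = log₂ rank(ρ_E)`.) -/
theorem stmt16 {𝒳 𝒴 : Type*} [Fintype 𝒳] [Fintype 𝒴] [DecidableEq 𝒴] {d : ℕ}
    (P : 𝒳 → 𝒴 → ℝ) (hP : ∀ x y, 0 ≤ P x y) (hsum : ∑ x, ∑ y, P x y = 1)
    (ρ : 𝒳 → 𝒴 → Matrix (Fin d) (Fin d) ℂ)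
    (hρ : ∀ x y, 0 < P x y → (ρ x y).PosSemidef ∧ (ρ x y).trace = 1) :
    sSup {r : ℝ | ∃ M : 𝒳 → Matrix (𝒴 × Fin d) (𝒴 × Fin d) ℂ,
        (∀ x, (M x).PosSemidef) ∧ (∑ x, M x = 1) ∧
        r = ∑ x, (∑ y, P x y) * (Matrix.trace (M x * rhoYE P ρ x)).re}
    ≤ ((∑ x, ∑ y, ((P x y : ℝ) : ℂ) • ρ x y).rank : ℝ) *
        ∑ y, (∑ x', P x' y) * ⨆ x, P x y / ∑ x', P x' y := by
  classical
  set σ : Matrix (Fin d) (Fin d) ℂ := ∑ x, ∑ y, ((P x y : ℝ) : ℂ) • ρ x y with hσdef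
  have hterm : ∀ p : 𝒳 × 𝒴, (((P p.1 p.2 : ℝ) : ℂ) • ρ p.1 p.2).PosSemidef := by
    rintro ⟨x, y⟩
    rcases (hP x y).lt_or_eq with h | h
    · exact auxSmulPsd16 (hρ x y h).1 (hP x y)
    · simp only [← h, Complex.ofReal_zero, zero_smul]
      exact Matrix.PosSemidef.zero
  have hσprod : σ = ∑ p : 𝒳 × 𝒴, ((P p.1 p.2 : ℝ) : ℂ) • ρ p.1 p.2 := by
    rw [hσdef, ← Finset.sum_product']
    rfl
  have hσpsd : σ.PosSemidef := by
    rw [hσprod]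
    exact auxSumPsd16 _ _ fun p _ => hterm p
  have hdiff : ∀ x y, 0 < P x y → (σ - ((P x y : ℝ) : ℂ) • ρ x y).PosSemidef := by
    intro x y hxy
    have h1 := Finset.add_sum_erase Finset.univ
      (fun p : 𝒳 × 𝒴 => ((P p.1 p.2 : ℝ) : ℂ) • ρ p.1 p.2) (Finset.mem_univ (x, y))
    have h2 : σ - ((P x y : ℝ) : ℂ) • ρ x y
        = ∑ p ∈ Finset.univ.erase (x, y), ((P p.1 p.2 : ℝ) : ℂ) • ρ p.1 p.2 := by
      rw [hσprod, ← h1]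
      abel
    rw [h2]
    exact auxSumPsd16 _ _ fun p _ => hterm p
  obtain ⟨Pi, hPiPsd, hPiTr, hPiKey⟩ := auxSupportProj16 hσpsd
  set c : 𝒴 → ℝ := fun y => (∑ x', P x' y) * ⨆ x, P x y / ∑ x', P x' y with hc
  have hc0 : ∀ y, 0 ≤ c y := fun y =>
    mul_nonneg (Finset.sum_nonneg fun x _ => hP x y)
      (Real.iSup_nonneg fun x => div_nonneg (hP x y) (Finset.sum_nonneg fun x' _ => hP x' y))
  have hPc : ∀ x y, P x y ≤ c y := by
    intro x y
    rcases (Finset.sum_nonneg fun x' _ => hP x' y : (0:ℝ) ≤ ∑ x', P x' y).eq_or_lt with h | h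
    · have h0 : P x y = 0 :=
        (Finset.sum_eq_zero_iff_of_nonneg (fun x' _ => hP x' y)).mp h.symm x (Finset.mem_univ x)
      rw [h0]
      exact hc0 y
    · have hle : P x y / (∑ x', P x' y) ≤ ⨆ x'', P x'' y / ∑ x', P x' y :=
        le_ciSup (f := fun x'' => P x'' y / ∑ x', P x' y)
          (Set.Finite.bddAbove (Set.finite_range _)) x
      calc P x y = (∑ x', P x' y) * (P x y / ∑ x', P x' y) := by
            rw [mul_comm, div_mul_cancel₀ _ (ne_of_gt h)]
        _ ≤ c y := mul_le_mul_of_nonneg_left hle h.le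
  apply Real.sSup_le
  · rintro r ⟨M, hMpsd, hMsum, rfl⟩
    set blk : 𝒳 → 𝒴 → Matrix (Fin d) (Fin d) ℂ :=
      fun x y => (M x).submatrix (fun i => (y, i)) (fun i => (y, i)) with hblk
    have hblkpsd : ∀ x y, (blk x y).PosSemidef := fun x y => (hMpsd x).submatrix _
    have hblksum : ∀ y, ∑ x, blk x y = 1 := by
      intro y
      have h1 : ∑ x, blk x y
          = (∑ x, M x).submatrix (fun i => (y, i)) (fun i => (y, i)) := by
        ext i j
        simp [hblk, Matrix.submatrix_apply, Matrix.sum_apply]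
      rw [h1, hMsum, auxSubOne16]
    set t : 𝒳 → 𝒴 → ℝ := fun x y => ((blk x y * ρ x y).trace).re with ht
    set u : 𝒳 → 𝒴 → ℝ := fun x y => ((blk x y * Pi).trace).re with hu
    have hdivS : ∀ x y, (∑ y', P x y') * (P x y / ∑ y', P x y') = P x y := by
      intro x y
      rcases eq_or_ne (∑ y', P x y') 0 with h | h
      · have h0 : P x y = 0 :=
          (Finset.sum_eq_zero_iff_of_nonneg (fun y' _ => hP x y')).mp h y (Finset.mem_univ y)
        rw [h, h0, zero_mul]
      · rw [mul_comm, div_mul_cancel₀ _ h]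
    have step1 : ∀ x, (∑ y, P x y) * (Matrix.trace (M x * rhoYE P ρ x)).re
        = ∑ y, P x y * t x y := by
      intro x
      have htr : (Matrix.trace (M x * rhoYE P ρ x)).re
          = ∑ y, (P x y / ∑ y', P x y') * t x y := by
        rw [rhoYE, Matrix.mul_sum]
        simp only [Matrix.mul_smul, Matrix.trace_sum, Matrix.trace_smul, Complex.re_sum]
        refine Finset.sum_congr rfl fun y _ => ?_
        rw [auxTraceKron16, smul_eq_mul, Complex.re_ofReal_mul]
      rw [htr, Finset.mul_sum]
      refine Finset.sum_congr rfl fun y _ => ?_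
      rw [← mul_assoc, hdivS]
    have hutot : ∀ y, ∑ x, u x y = ((σ.rank : ℕ) : ℝ) := by
      intro y
      have h1 : ∑ x, u x y = ((∑ x, (blk x y * Pi)).trace).re := by
        rw [Matrix.trace_sum, Complex.re_sum]
      rw [h1, ← Finset.sum_mul, hblksum, Matrix.one_mul, hPiTr]
      simp
    have step2 : ∀ y, ∑ x, P x y * t x y ≤ c y * ((σ.rank : ℕ) : ℝ) := by
      intro y
      have hterm2 : ∀ x, P x y * t x y ≤ c y * u x y := by
        intro x
        have hu0 : 0 ≤ u x y := auxTraceMulReNonneg16 (hblkpsd x y) hPiPsd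
        rcases (hP x y).lt_or_eq with h | h
        · have hρp := (hρ x y h).1
          have hρt := (hρ x y h).2
          have hBle : (Pi - ρ x y).PosSemidef := hPiKey (ρ x y) hρp hρt (P x y) h (hdiff x y h)
          have htu : t x y ≤ u x y := by
            have h6 := auxTraceMulReNonneg16 (hblkpsd x y) hBle
            rw [Matrix.mul_sub, Matrix.trace_sub, Complex.sub_re] at h6
            exact sub_nonneg.mp h6
          have ht0 : 0 ≤ t x y := auxTraceMulReNonneg16 (hblkpsd x y) hρp
          calc P x y * t x y ≤ c y * t x y := mul_le_mul_of_nonneg_right (hPc x y) ht0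
            _ ≤ c y * u x y := mul_le_mul_of_nonneg_left htu (hc0 y)
        · rw [← h, zero_mul]
          exact mul_nonneg (hc0 y) hu0
      calc ∑ x, P x y * t x y ≤ ∑ x, c y * u x y :=
            Finset.sum_le_sum fun x _ => hterm2 x
        _ = c y * ∑ x, u x y := by rw [Finset.mul_sum]
        _ = c y * ((σ.rank : ℕ) : ℝ) := by rw [hutot y]
    calc ∑ x, (∑ y, P x y) * (Matrix.trace (M x * rhoYE P ρ x)).re
        = ∑ x, ∑ y, P x y * t x y := Finset.sum_congr rfl fun x _ => step1 x
      _ = ∑ y, ∑ x, P x y * t x y := Finset.sum_comm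
      _ ≤ ∑ y, c y * ((σ.rank : ℕ) : ℝ) := Finset.sum_le_sum fun y _ => step2 y
      _ = ((σ.rank : ℕ) : ℝ) * ∑ y, c y := by rw [← Finset.sum_mul, mul_comm]
  · exact mul_nonneg (Nat.cast_nonneg _) (Finset.sum_nonneg fun y _ => hc0 y)
end
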